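/- Suppose a set I of BS-user pairs in a (G,K,M×N) cluster is such that every user appears in at most q pairs of I and every BS appears in at most Kq pairs of I (with 1 ≤ q ≤ G-1). If M ≥ 1, N ≥ K, and M + N ≥ K(q+1) + 1, then for every subset J ⊆ I the inequality |J_users|(M-1) + |J_BS|(N-K)K ≥ |J|K holds, where J_users and J_BS denote the sets of user indices and BS indices appearing in J. -/
import Mathlib


/-- If every user appears in at most `q` pairs of `I` and every BS
appears in at most `K * q` pairs of `I`, with `1 ≤ q ≤ G - 1`, `M ≥ 1`, `N ≥ K`,
and `M + N ≥ K * (q + 1) + 1`, then for every `J ⊆ I`,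
`|J_users| * (M - 1) + |J_BS| * (N - K) * K ≥ |J| * K`. -/
theorem stmt0 {BS User : Type*} [DecidableEq BS] [DecidableEq User]
    (G K M N q : ℕ) (hG : 0 < G) (hK : 0 < K) (hM1 : 1 ≤ M) (hNK : K ≤ N)
    (hq1 : 1 ≤ q) (hqG : q ≤ G - 1)
    (hMN : M + N ≥ K * (q + 1) + 1)
    (I : Finset (BS × User))
    (huser : ∀ u : User, (I.filter (fun p => p.2 = u)).card ≤ q)
    (hbs : ∀ i : BS, (I.filter (fun p => p.1 = i)).card ≤ K * q) :
    ∀ J ⊆ I,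
      (J.image Prod.snd).card * (M - 1) + (J.image Prod.fst).card * (N - K) * K
        ≥ J.card * K := by
  intro J hJ
  have h1 : J.card ≤ q * (J.image Prod.snd).card := by
    apply Finset.card_le_mul_card_image
    intro u _
    calc (J.filter (fun p => p.2 = u)).card
        ≤ (I.filter (fun p => p.2 = u)).card :=
          Finset.card_le_card (Finset.filter_subset_filter _ hJ)
      _ ≤ q := huser u
  have h2 : J.card ≤ (K * q) * (J.image Prod.fst).card := by
    apply Finset.card_le_mul_card_image
    intro i _
    calc (J.filter (fun p => p.1 = i)).card
        ≤ (I.filter (fun p => p.1 = i)).card :=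
          Finset.card_le_card (Finset.filter_subset_filter _ hJ)
      _ ≤ K * q := hbs i
  obtain ⟨m, hm⟩ : ∃ m, M = m + 1 := ⟨M - 1, by omega⟩
  obtain ⟨n, hn⟩ : ∃ n, N = n + K := ⟨N - K, by omega⟩
  have hM1' : M - 1 = m := by omega
  have hN' : N - K = n := by omega
  have hkey : m + n ≥ K * q := by
    have h := hMN
    rw [Nat.mul_add, Nat.mul_one] at h
    omega
  rw [hM1', hN']
  have hq : 0 < q := hq1
  refine Nat.le_of_mul_le_mul_left ?_ hq
  nlinarith [h1, h2, hkey, Nat.zero_le J.card]
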